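/- Let w₁,…,w_m ∈ ℝⁿ and let a₁,…,a_m ∈ {−1, +1}. Suppose the image of H(n,d) under the evaluation map E(f) = (f(w₁),…,f(w_m)) is exactly the hyperplane L = {x ∈ ℝ^m : a₁x₁ + … + a_mx_m = 0}. Then the image of the sums-of-squares cone Σ(n,2d) under evaluation at w₁,…,w_m equals T_m = {x ∈ ℝ^m : x_i ≥ 0 for all i, and √x₁ + … + √x_m ≥ 2√x_k for all k}. -/

import Mathlib

set_option maxHeartbeats 1600000
open Finset

lemma tri (a b c : ℝ) (ha : 0 ≤ a) (hb : 0 ≤ b) (hc : 0 ≤ c)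
    (h1 : a ≤ b + c) (h2 : b ≤ a + c) (h3 : c ≤ a + b) :
    ∃ p q : ℝ, p ^ 2 + q ^ 2 = b ^ 2 ∧ (a + p) ^ 2 + q ^ 2 = c ^ 2 := by
  rcases eq_or_lt_of_le ha with h | h
  · have hbc : b = c := le_antisymm (by linarith) (by linarith)
    exact ⟨b, 0, by ring, by rw [← h, ← hbc]; ring⟩
  · set p := (c ^ 2 - b ^ 2 - a ^ 2) / (2 * a) with hp
    have hpb : p ^ 2 ≤ b ^ 2 := by
      rw [hp, div_pow, div_le_iff₀ (by positivity)]
      nlinarith [mul_nonneg (mul_nonneg (by linarith : (0:ℝ) ≤ a + b + c)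
        (by linarith : (0:ℝ) ≤ a + b - c)) (mul_nonneg
        (by linarith : (0:ℝ) ≤ c - a + b) (by linarith : (0:ℝ) ≤ c + a - b))]
    refine ⟨p, Real.sqrt (b ^ 2 - p ^ 2), ?_, ?_⟩
    · rw [Real.sq_sqrt (by linarith)]; ring
    · rw [Real.sq_sqrt (by linarith)]
      have : a ≠ 0 := ne_of_gt h
      field_simp [hp]
      rw [hp]; field_simp; ring

lemma partition {ι : Type*} [DecidableEq ι] (T : Finset ι) (s : ι → ℝ) (A : ℝ) (hA0 : 0 ≤ A)
    (h0 : ∀ i ∈ T, 0 ≤ s i) (hA : ∀ i ∈ T, s i ≤ A) :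
    ∃ ε : ι → ℝ, (∀ i, ε i = 1 ∨ ε i = -1) ∧ |∑ i ∈ T, ε i * s i| ≤ A := by
  induction T using Finset.induction_on with
  | empty => exact ⟨fun _ => 1, fun _ => Or.inl rfl, by simpa⟩
  | @insert j T hj ih =>
    obtain ⟨ε, hε, hσ⟩ := ih (fun i hi => h0 i (mem_insert_of_mem hi))
      (fun i hi => hA i (mem_insert_of_mem hi))
    set σ := ∑ i ∈ T, ε i * s i with hσdef
    set e : ℝ := if 0 ≤ σ then -1 else 1 with he
    refine ⟨Function.update ε j e, ?_, ?_⟩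
    · intro i
      rcases eq_or_ne i j with rfl | hij
      · rw [Function.update_self, he]; split <;> simp
      · rw [Function.update_of_ne hij]; exact hε i
    · rw [Finset.sum_insert hj, Function.update_self]
      have hrest : ∑ i ∈ T, Function.update ε j e i * s i = σ := by
        refine Finset.sum_congr rfl fun i hi => ?_
        have : i ≠ j := by rintro rfl; exact hj hi
        rw [Function.update_of_ne this]
      rw [hrest]
      have h0j := h0 j (mem_insert_self j T)
      have hAj := hA j (mem_insert_self j T)
      rw [abs_le] at hσ ⊢
      rw [he]
      split <;> rename_i hs
      · constructor <;> nlinarith [hσ.1, hσ.2]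
      · push_neg at hs
        constructor <;> nlinarith [hσ.1, hσ.2]

lemma closing {m : ℕ} (s : Fin m → ℝ) (h0 : ∀ i, 0 ≤ s i)
    (h : ∀ k, 2 * s k ≤ ∑ i, s i) :
    ∃ f g : Fin m → ℝ, (∀ i, f i ^ 2 + g i ^ 2 = s i ^ 2) ∧
      ∑ i, f i = 0 ∧ ∑ i, g i = 0 := by
  cases isEmpty_or_nonempty (Fin m) with
  | inl hm => exact ⟨0, 0, fun i => (IsEmpty.false i).elim, by simp, by simp⟩
  | inr hm =>
  obtain ⟨k, -, hk⟩ := Finset.exists_max_image univ s univ_nonempty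
  set T := univ.erase k with hT
  set A := s k with hAdef
  have hA0 : 0 ≤ A := h0 k
  have hsumT : A + ∑ i ∈ T, s i = ∑ i, s i := Finset.add_sum_erase _ s (mem_univ k)
  have hAB : A ≤ ∑ i ∈ T, s i := by have := h k; rw [← hsumT] at this; linarith
  obtain ⟨ε, hε, hσ⟩ := partition T s A hA0 (fun i _ => h0 i) (fun i _ => hk i (mem_univ i))
  set σ := ∑ i ∈ T, ε i * s i with hσdef
  set b := ∑ i ∈ T, (1 + ε i) / 2 * s i with hbdef
  set c := ∑ i ∈ T, (1 - ε i) / 2 * s i with hcdef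
  have htb : ∀ j, 0 ≤ (1 + ε j) / 2 * s j := by
    intro j
    rcases hε j with hj | hj
    · rw [hj]; nlinarith [h0 j]
    · rw [hj]; norm_num
  have htc : ∀ j, 0 ≤ (1 - ε j) / 2 * s j := by
    intro j
    rcases hε j with hj | hj
    · rw [hj]; norm_num
    · rw [hj]; nlinarith [h0 j]
  have hb0 : 0 ≤ b := Finset.sum_nonneg fun i _ => htb i
  have hc0 : 0 ≤ c := Finset.sum_nonneg fun i _ => htc i
  have hbc : b + c = ∑ i ∈ T, s i := by
    rw [hbdef, hcdef, ← Finset.sum_add_distrib]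
    exact Finset.sum_congr rfl fun i _ => by ring
  have hbmc : b - c = σ := by
    rw [hbdef, hcdef, hσdef, ← Finset.sum_sub_distrib]
    exact Finset.sum_congr rfl fun i _ => by ring
  rw [abs_le] at hσ
  obtain ⟨p, q, hpq1, hpq2⟩ := tri A b c hA0 hb0 hc0 (by linarith) (by linarith) (by linarith)
  have hbz : b = 0 → p = 0 ∧ q = 0 := fun hb => by
    constructor <;> nlinarith [sq_nonneg p, sq_nonneg q]
  have hcz : c = 0 → A + p = 0 ∧ q = 0 := fun hc => by
    constructor <;> nlinarith [sq_nonneg (A + p), sq_nonneg q]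
  have hsb : ∀ i ∈ T, ε i = 1 → b = 0 → s i = 0 := by
    intro i hi hei hb
    have h3 := (Finset.sum_eq_zero_iff_of_nonneg (fun j _ => htb j)).mp hb i hi
    rw [hei] at h3; linarith
  have hsc : ∀ i ∈ T, ε i = -1 → c = 0 → s i = 0 := by
    intro i hi hei hc
    have h3 := (Finset.sum_eq_zero_iff_of_nonneg (fun j _ => htc j)).mp hc i hi
    rw [hei] at h3; linarith
  classical
  refine ⟨fun i => if i = k then A else s i * (if ε i = 1 then p / b else (-A - p) / c),
    fun i => if i = k then 0 else s i * (if ε i = 1 then q / b else -q / c), ?_, ?_, ?_⟩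
  · intro i
    by_cases hik : i = k
    · simp [hik, hAdef]
    · have hiT : i ∈ T := mem_erase.mpr ⟨hik, mem_univ i⟩
      rcases hε i with hi | hi
      · simp only [if_neg hik, if_pos hi]
        by_cases hb : b = 0
        · rw [hsb i hiT hi hb]; ring
        · field_simp [hb]
          nlinarith [hpq1]
      · have hi' : ¬ ε i = 1 := by rw [hi]; norm_num
        simp only [if_neg hik, if_neg hi']
        by_cases hc : c = 0
        · rw [hsc i hiT hi hc]; ring
        · field_simp [hc]
          nlinarith [hpq2]
  · rw [← Finset.add_sum_erase _ _ (mem_univ k), if_pos rfl, ← hT]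
    have : ∑ i ∈ T, (if i = k then A else s i * (if ε i = 1 then p / b else (-A - p) / c))
        = ∑ i ∈ T, ((1 + ε i) / 2 * s i * (p / b) + (1 - ε i) / 2 * s i * ((-A - p) / c)) := by
      refine Finset.sum_congr rfl fun i hi => ?_
      have hik := (mem_erase.mp hi).1
      rcases hε i with he | he
      · rw [if_neg hik, if_pos he, he]; ring
      · have he' : ¬ ε i = 1 := by rw [he]; norm_num
        rw [if_neg hik, if_neg he', he]; ring
    rw [this, Finset.sum_add_distrib, ← Finset.sum_mul, ← Finset.sum_mul, ← hbdef, ← hcdef]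
    have h1 : b * (p / b) = p := by
      by_cases hb : b = 0
      · simp [hb, (hbz hb).1]
      · field_simp [hb]
    have h2 : c * ((-A - p) / c) = -A - p := by
      by_cases hc : c = 0
      · have := (hcz hc).1; simp [hc]; linarith
      · field_simp [hc]
    rw [h1, h2]; ring
  · rw [← Finset.add_sum_erase _ _ (mem_univ k), if_pos rfl, ← hT]
    have : ∑ i ∈ T, (if i = k then (0:ℝ) else s i * (if ε i = 1 then q / b else -q / c))
        = ∑ i ∈ T, ((1 + ε i) / 2 * s i * (q / b) + (1 - ε i) / 2 * s i * (-q / c)) := by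
      refine Finset.sum_congr rfl fun i hi => ?_
      have hik := (mem_erase.mp hi).1
      rcases hε i with he | he
      · rw [if_neg hik, if_pos he, he]; ring
      · have he' : ¬ ε i = 1 := by rw [he]; norm_num
        rw [if_neg hik, if_neg he', he]; ring
    rw [this, Finset.sum_add_distrib, ← Finset.sum_mul, ← Finset.sum_mul, ← hbdef, ← hcdef]
    have h1 : b * (q / b) = q := by
      by_cases hb : b = 0
      · simp [hb, (hbz hb).2]
      · field_simp [hb]
    have h2 : c * (-q / c) = -q := by
      by_cases hc : c = 0
      · simp [hc, (hcz hc).2]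
      · field_simp [hc]
    rw [h1, h2]; ring

open MvPolynomial

/-- Membership in the cone Σ(n,2d): a sum of squares of degree-d forms. -/
def IsSOS (n d : ℕ) (p : MvPolynomial (Fin n) ℝ) : Prop :=
  ∃ (r : ℕ) (q : Fin r → MvPolynomial (Fin n) ℝ),
    (∀ i, (q i).IsHomogeneous d) ∧ p = ∑ i, q i ^ 2

/-- The cone T_m ⊆ ℝ^m: nonnegative vectors x with √x₁ + … + √x_m ≥ 2√x_k for all k. -/
def Tcone (m : ℕ) : Set (Fin m → ℝ) :=
  {x | (∀ i, 0 ≤ x i) ∧ ∀ k, 2 * Real.sqrt (x k) ≤ ∑ i, Real.sqrt (x i)}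

theorem stmt_13
    (n d m : ℕ)
    (w : Fin m → Fin n → ℝ)
    (a : Fin m → ℝ) (ha : ∀ i, a i = 1 ∨ a i = -1)
    (himage : {y : Fin m → ℝ | ∃ f : MvPolynomial (Fin n) ℝ,
        f.IsHomogeneous d ∧ ∀ i, eval (w i) f = y i} =
      {x : Fin m → ℝ | ∑ i, a i * x i = 0}) :
    {y : Fin m → ℝ | ∃ p : MvPolynomial (Fin n) ℝ,
        IsSOS n d p ∧ ∀ i, eval (w i) p = y i} = Tcone m := by
  have ha2 : ∀ i, a i ^ 2 = 1 := fun i => by rcases ha i with h | h <;> rw [h] <;> norm_num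
  have H1 : ∀ f : MvPolynomial (Fin n) ℝ, f.IsHomogeneous d →
      ∑ i, a i * eval (w i) f = 0 := by
    intro f hf
    have hmem : (fun i => eval (w i) f) ∈ {y : Fin m → ℝ | ∃ f : MvPolynomial (Fin n) ℝ,
        f.IsHomogeneous d ∧ ∀ i, eval (w i) f = y i} := ⟨f, hf, fun i => rfl⟩
    rw [himage] at hmem
    exact hmem
  have H2 : ∀ x : Fin m → ℝ, ∑ i, a i * x i = 0 →
      ∃ f : MvPolynomial (Fin n) ℝ, f.IsHomogeneous d ∧ ∀ i, eval (w i) f = x i := by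
    intro x hx
    have hmem : x ∈ {x : Fin m → ℝ | ∑ i, a i * x i = 0} := hx
    rw [← himage] at hmem
    exact hmem
  ext y
  constructor
  · rintro ⟨p, ⟨r, q, hq, rfl⟩, hy⟩
    have hy' : ∀ i, y i = ∑ j, (eval (w i) (q j)) ^ 2 := by
      intro i
      rw [← hy i]
      simp [map_sum, map_pow]
    refine ⟨fun i => by rw [hy' i]; exact Finset.sum_nonneg fun j _ => sq_nonneg _, ?_⟩
    intro k
    set V : Fin m → EuclideanSpace ℝ (Fin r) := fun i => WithLp.toLp 2 (fun j => eval (w i) (q j)) with hV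
    have hnorm : ∀ i, ‖V i‖ = Real.sqrt (y i) := by
      intro i
      rw [EuclideanSpace.norm_eq, hy' i]
      congr 1
      exact Finset.sum_congr rfl fun j _ => by rw [Real.norm_eq_abs, sq_abs]
    have hzero : ∀ j, ∑ i, a i * eval (w i) (q j) = 0 := fun j => H1 (q j) (hq j)
    have hVk : V k = ∑ i ∈ Finset.univ.erase k, (-(a k * a i)) • V i := by
      ext j
      have happ : ∀ (S : Finset (Fin m)) (c : Fin m → ℝ),
          (∑ i ∈ S, c i • V i) j = ∑ i ∈ S, c i * V i j := by
        intro S c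
        induction S using Finset.cons_induction with
        | empty => rfl
        | cons x S hx ih => rw [Finset.sum_cons, Finset.sum_cons, ← ih]; rfl
      rw [show ((∑ i ∈ Finset.univ.erase k, (-(a k * a i)) • V i) j)
          = ∑ i ∈ Finset.univ.erase k, (-(a k * a i)) * V i j from happ _ _]
      have hsplit : a k * eval (w k) (q j)
          + ∑ i ∈ Finset.univ.erase k, a i * eval (w i) (q j) = 0 := by
        rw [Finset.add_sum_erase _ (fun i => a i * eval (w i) (q j)) (Finset.mem_univ k)]
        exact hzero j
      have hVapp : ∀ i, V i j = eval (w i) (q j) := fun i => rfl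
      simp only [hVapp]
      rw [show (∑ i ∈ Finset.univ.erase k, -(a k * a i) * eval (w i) (q j))
          = -(a k) * ∑ i ∈ Finset.univ.erase k, a i * eval (w i) (q j) from by
        rw [Finset.mul_sum]; exact Finset.sum_congr rfl fun i _ => by ring]
      linear_combination a k * hsplit - eval (w k) (q j) * ha2 k
    have hle : ‖V k‖ ≤ ∑ i ∈ Finset.univ.erase k, ‖V i‖ := by
      calc ‖V k‖ = ‖∑ i ∈ Finset.univ.erase k, (-(a k * a i)) • V i‖ := by rw [← hVk]
        _ ≤ ∑ i ∈ Finset.univ.erase k, ‖(-(a k * a i)) • V i‖ := norm_sum_le _ _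
        _ = ∑ i ∈ Finset.univ.erase k, ‖V i‖ := by
            refine Finset.sum_congr rfl fun i _ => ?_
            rw [norm_smul, Real.norm_eq_abs]
            rcases ha i with h | h <;> rcases ha k with h' | h' <;> rw [h, h'] <;> norm_num
    have hsum : ∑ i, Real.sqrt (y i) = ‖V k‖ + ∑ i ∈ Finset.univ.erase k, ‖V i‖ := by
      rw [Finset.add_sum_erase _ (fun i => ‖V i‖) (Finset.mem_univ k)]
      exact Finset.sum_congr rfl fun i _ => (hnorm i).symm
    rw [← hnorm k, hsum]
    linarith
  · rintro ⟨hx0, hx⟩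
    obtain ⟨f, g, hfg, hf0, hg0⟩ := closing (fun i => Real.sqrt (y i))
      (fun i => Real.sqrt_nonneg _) hx
    have hs2 : ∀ i, Real.sqrt (y i) ^ 2 = y i := fun i => Real.sq_sqrt (hx0 i)
    obtain ⟨F, hF, hFe⟩ := H2 (fun i => a i * f i) (by
      have : ∀ i, a i * (a i * f i) = f i := fun i => by
        rcases ha i with h | h <;> rw [h] <;> ring
      rw [Finset.sum_congr rfl fun i _ => this i]
      exact hf0)
    obtain ⟨G, hG, hGe⟩ := H2 (fun i => a i * g i) (by
      have : ∀ i, a i * (a i * g i) = g i := fun i => by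
        rcases ha i with h | h <;> rw [h] <;> ring
      rw [Finset.sum_congr rfl fun i _ => this i]
      exact hg0)
    refine ⟨F ^ 2 + G ^ 2, ⟨2, ![F, G], ?_, ?_⟩, ?_⟩
    · intro j; fin_cases j <;> simpa
    · simp [Fin.sum_univ_two]
    · intro i
      have : eval (w i) (F ^ 2 + G ^ 2) = (a i * f i) ^ 2 + (a i * g i) ^ 2 := by
        simp [hFe i, hGe i]
      rw [this]
      linear_combination (a i) ^ 2 * hfg i + (a i) ^ 2 * hs2 i + y i * ha2 i
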